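/- arXiv:1511.05646 — 8 statements merged into one kernel-verified Lean document; each statement's English description precedes it below -/
import Mathlib

section
/- Let R be a finite directed weighted graph with no negative-weight directed cycles, let Δ > 0 be the minimum total weight among directed cycles of strictly positive weight, and let ε = Δ/(n+1) where n is the number of vertices. Form R' by deleting every edge that lies on some directed cycle of total weight 0, and decreasing every remaining edge weight by ε. Then every directed cycle of R' has strictly positive total weight. -/
/-- A directed cycle in the graph with edge relation `E`: a cyclic sequence of vertices all of
whose consecutive pairs (with wraparound, via `Fin` addition) are edges. -/
def IsCycle {V : Type*} (E : V → V → Prop) {ℓ : ℕ} (c : Fin (ℓ + 1) → V) : Prop :=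
  ∀ j : Fin (ℓ + 1), E (c j) (c (j + 1))

/-- The total weight of a directed cycle. -/
def cycleWeight {V : Type*} (W : V → V → ℝ) {ℓ : ℕ} (c : Fin (ℓ + 1) → V) : ℝ :=
  ∑ j : Fin (ℓ + 1), W (c j) (c (j + 1))

/-- The edge `⟨b, b'⟩` lies on some directed cycle of total weight `0`. -/
def OnZeroCycle {V : Type*} (E : V → V → Prop) (W : V → V → ℝ) (b b' : V) : Prop :=
  ∃ (ℓ : ℕ) (c : Fin (ℓ + 1) → V), IsCycle E c ∧ cycleWeight W c = 0 ∧
    ∃ j : Fin (ℓ + 1), c j = b ∧ c (j + 1) = b'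

/-- subcycle of `c` starting at position `s` with `m+1` edges -/
def pc {V : Type*} {ℓ : ℕ} (c : Fin (ℓ + 1) → V) (s m : ℕ) : Fin (m + 1) → V :=
  fun k => c ⟨(s + k.val) % (ℓ + 1), Nat.mod_lt _ (Nat.succ_pos ℓ)⟩

/-- weight function on nat indices -/
def Fw {V : Type*} (g : V → V → ℝ) {ℓ : ℕ} (c : Fin (ℓ + 1) → V) : ℕ → ℝ :=
  fun t => g (c ⟨t % (ℓ + 1), Nat.mod_lt _ (Nat.succ_pos ℓ)⟩)
    (c (⟨t % (ℓ + 1), Nat.mod_lt _ (Nat.succ_pos ℓ)⟩ + 1))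

lemma pc_step {V : Type*} {ℓ : ℕ} (hℓ : 1 ≤ ℓ) (c : Fin (ℓ + 1) → V) (s m : ℕ)
    (hwrap : c ⟨(s + m + 1) % (ℓ + 1), Nat.mod_lt _ (Nat.succ_pos ℓ)⟩
      = c ⟨s % (ℓ + 1), Nat.mod_lt _ (Nat.succ_pos ℓ)⟩) (k : Fin (m + 1)) :
    pc c s m (k + 1) = c (⟨(s + k.val) % (ℓ + 1), Nat.mod_lt _ (Nat.succ_pos ℓ)⟩ + 1) := by
  have hone : (1 : Fin (ℓ + 1)).val = 1 := by
    rw [Fin.val_one']; exact Nat.mod_eq_of_lt (by omega)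
  have hval : ∀ (x : ℕ) (hx : x < ℓ + 1),
      ((⟨x, hx⟩ : Fin (ℓ + 1)) + 1).val = (x + 1) % (ℓ + 1) := by
    intro x hx; rw [Fin.add_def, hone]
  by_cases hk : k.val < m
  · have e : (k + 1 : Fin (m + 1)).val = k.val + 1 :=
      Fin.val_add_one_of_lt (by rw [Fin.lt_def, Fin.val_last]; exact hk)
    show c _ = c _
    congr 1
    apply Fin.ext
    show (s + (k + 1 : Fin (m+1)).val) % (ℓ + 1) = _
    rw [e, hval, Nat.mod_add_mod, Nat.add_assoc]
  · have hk' : k.val = m := by omega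
    have e : (k + 1 : Fin (m + 1)).val = 0 := by
      have hkl : k = Fin.last m := Fin.ext hk'
      rw [hkl, Fin.last_add_one]; rfl
    have eR : (⟨(s + k.val) % (ℓ + 1), Nat.mod_lt _ (Nat.succ_pos ℓ)⟩ + 1 : Fin (ℓ + 1))
        = ⟨(s + m + 1) % (ℓ + 1), Nat.mod_lt _ (Nat.succ_pos ℓ)⟩ := by
      apply Fin.ext
      rw [hval, hk', Nat.mod_add_mod]
    rw [eR, hwrap]
    show c _ = c _
    congr 1
    apply Fin.ext
    show (s + (k + 1 : Fin (m+1)).val) % (ℓ + 1) = s % (ℓ + 1)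
    rw [e, Nat.add_zero]

lemma pc_term {V : Type*} {ℓ : ℕ} (hℓ : 1 ≤ ℓ) (c : Fin (ℓ + 1) → V) (g : V → V → ℝ) (s m : ℕ)
    (hwrap : c ⟨(s + m + 1) % (ℓ + 1), Nat.mod_lt _ (Nat.succ_pos ℓ)⟩
      = c ⟨s % (ℓ + 1), Nat.mod_lt _ (Nat.succ_pos ℓ)⟩) (k : Fin (m + 1)) :
    g (pc c s m k) (pc c s m (k + 1)) = Fw g c (s + k.val) := by
  rw [pc_step hℓ c s m hwrap k]
  rfl

lemma cycle_split {V : Type*} (P : V → V → Prop) (g : V → V → ℝ) {ℓ : ℕ}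
    (c : Fin (ℓ + 1) → V) (hc : ∀ t : Fin (ℓ + 1), P (c t) (c (t + 1)))
    {i j : Fin (ℓ + 1)} (hlt : i.val < j.val) (hceq : c i = c j) :
    ∃ (a b : ℕ) (c1 : Fin (a + 1) → V) (c2 : Fin (b + 1) → V),
      a + 1 ≤ ℓ ∧ b + 1 ≤ ℓ ∧
      (∀ t : Fin (a + 1), P (c1 t) (c1 (t + 1))) ∧
      (∀ t : Fin (b + 1), P (c2 t) (c2 (t + 1))) ∧
      ∑ t : Fin (ℓ + 1), g (c t) (c (t + 1)) =
        (∑ t : Fin (a + 1), g (c1 t) (c1 (t + 1))) +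
          ∑ t : Fin (b + 1), g (c2 t) (c2 (t + 1)) := by
  have hjl : j.val < ℓ + 1 := j.isLt
  have hℓ : 1 ≤ ℓ := by omega
  obtain ⟨a, ha⟩ : ∃ a, j.val - i.val = a + 1 := ⟨j.val - i.val - 1, by omega⟩
  obtain ⟨b, hb⟩ : ∃ b, (ℓ + 1) - (j.val - i.val) = b + 1 := ⟨ℓ - (j.val - i.val), by omega⟩
  -- key index facts
  have hmk : ∀ (x : ℕ) (hx : x < ℓ + 1), (⟨x % (ℓ+1), Nat.mod_lt _ (Nat.succ_pos ℓ)⟩ : Fin (ℓ+1)) = ⟨x, hx⟩ := by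
    intro x hx; exact Fin.ext (Nat.mod_eq_of_lt hx)
  have hwrap1 : c ⟨(i.val + a + 1) % (ℓ + 1), Nat.mod_lt _ (Nat.succ_pos ℓ)⟩
      = c ⟨i.val % (ℓ + 1), Nat.mod_lt _ (Nat.succ_pos ℓ)⟩ := by
    rw [hmk _ (show i.val + a + 1 < ℓ + 1 by omega), hmk _ i.isLt]
    have h1 : (⟨i.val + a + 1, by omega⟩ : Fin (ℓ+1)) = j := Fin.ext (by
      show i.val + a + 1 = j.val
      omega)
    have h2 : (⟨i.val, i.isLt⟩ : Fin (ℓ+1)) = i := Fin.ext rfl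
    rw [h1, h2, hceq]
  have hwrap2 : c ⟨(j.val + b + 1) % (ℓ + 1), Nat.mod_lt _ (Nat.succ_pos ℓ)⟩
      = c ⟨j.val % (ℓ + 1), Nat.mod_lt _ (Nat.succ_pos ℓ)⟩ := by
    rw [hmk _ j.isLt]
    have h0 : j.val + b + 1 = (ℓ + 1) + i.val := by omega
    have h1 : (j.val + b + 1) % (ℓ + 1) = i.val := by
      rw [h0, Nat.add_comm (ℓ+1) i.val, Nat.add_mod_right]
      exact Nat.mod_eq_of_lt i.isLt
    have h2 : (⟨(j.val + b + 1) % (ℓ + 1), Nat.mod_lt _ (Nat.succ_pos ℓ)⟩ : Fin (ℓ+1)) = i :=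
      Fin.ext h1
    have h3 : (⟨j.val, j.isLt⟩ : Fin (ℓ+1)) = j := Fin.ext rfl
    rw [h2, h3, hceq]
  have hA : a + 1 ≤ ℓ := by omega
  have hB : b + 1 ≤ ℓ := by omega
  refine ⟨a, b, pc c i.val a, pc c j.val b, hA, hB, ?_, ?_, ?_⟩
  · intro t
    rw [pc_step hℓ c i.val a hwrap1 t]
    exact hc _
  · intro t
    rw [pc_step hℓ c j.val b hwrap2 t]
    exact hc _
  · -- the sum identity
    have hstep1 : ∑ t : Fin (ℓ + 1), g (c t) (c (t + 1)) = ∑ t ∈ Finset.range (ℓ+1), Fw g c t := by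
      rw [← Fin.sum_univ_eq_sum_range (Fw g c) (ℓ+1)]
      refine Finset.sum_congr rfl (fun t _ => ?_)
      show g (c t) (c (t+1)) = g (c ⟨t.val % (ℓ+1), _⟩) (c (⟨t.val % (ℓ+1), _⟩ + 1))
      rw [hmk _ t.isLt, show (⟨t.val, t.isLt⟩ : Fin (ℓ+1)) = t from Fin.ext rfl]
    have hFmod : ∀ t : ℕ, Fw g c (t % (ℓ+1)) = Fw g c t := by
      intro t
      have h2 : (⟨t % (ℓ+1) % (ℓ+1), Nat.mod_lt _ (Nat.succ_pos ℓ)⟩ : Fin (ℓ+1))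
          = ⟨t % (ℓ+1), Nat.mod_lt _ (Nat.succ_pos ℓ)⟩ :=
        Fin.ext (Nat.mod_mod_of_dvd t dvd_rfl)
      simp only [Fw]
      rw [h2]
    have hstep2 : ∑ t ∈ Finset.range (ℓ+1), Fw g c t
        = ∑ t ∈ Finset.range (ℓ+1), Fw g c (i.val + t) := by
      rw [← Fin.sum_univ_eq_sum_range (Fw g c) (ℓ+1),
        ← Fin.sum_univ_eq_sum_range (fun t => Fw g c (i.val + t)) (ℓ+1)]
      refine (Fintype.sum_equiv (Equiv.addLeft i) _ _ (fun k => ?_)).symm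
      show Fw g c (i.val + k.val) = Fw g c ((i + k : Fin (ℓ+1)).val)
      rw [Fin.add_def]
      exact (hFmod _).symm
    have hstep3 : ∑ t ∈ Finset.range (ℓ+1), Fw g c (i.val + t)
        = ∑ t ∈ Finset.Ico i.val (i.val + (ℓ+1)), Fw g c t := by
      rw [Finset.sum_Ico_eq_sum_range,
        show i.val + (ℓ + 1) - i.val = ℓ + 1 from by omega]
    have hstep4 : ∑ t ∈ Finset.Ico i.val (i.val + (ℓ+1)), Fw g c t
        = (∑ t ∈ Finset.Ico i.val j.val, Fw g c t)
          + ∑ t ∈ Finset.Ico j.val (i.val + (ℓ+1)), Fw g c t :=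
      (Finset.sum_Ico_consecutive _ (by omega) (by omega)).symm
    have hp1 : ∑ t ∈ Finset.Ico i.val j.val, Fw g c t
        = ∑ t : Fin (a + 1), g (pc c i.val a t) (pc c i.val a (t + 1)) := by
      rw [Finset.sum_Ico_eq_sum_range, show j.val - i.val = a + 1 from ha,
        ← Fin.sum_univ_eq_sum_range (fun k => Fw g c (i.val + k)) (a+1)]
      exact Finset.sum_congr rfl (fun t _ => (pc_term hℓ c g i.val a hwrap1 t).symm)
    have hp2 : ∑ t ∈ Finset.Ico j.val (i.val + (ℓ+1)), Fw g c t
        = ∑ t : Fin (b + 1), g (pc c j.val b t) (pc c j.val b (t + 1)) := by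
      rw [Finset.sum_Ico_eq_sum_range, show i.val + (ℓ+1) - j.val = b + 1 by omega,
        ← Fin.sum_univ_eq_sum_range (fun k => Fw g c (j.val + k)) (b+1)]
      exact Finset.sum_congr rfl (fun t _ => (pc_term hℓ c g j.val b hwrap2 t).symm)
    rw [hstep1, hstep2, hstep3, hstep4, hp1, hp2]

/-- If a finite directed weighted graph `R = (V, E, W)` has no negative-weight
cycle, `Δ > 0` is the minimum weight among its strictly positive cycles, and
`ε = Δ / (|V| + 1)`, then after deleting all edges lying on a zero-weight cycle and decreasing
each remaining edge weight by `ε`, every directed cycle of the resulting graph `R'` has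
strictly positive total weight. -/
theorem stmt_1 {V : Type*} [Fintype V] (E : V → V → Prop) (W : V → V → ℝ) (Δ : ℝ)
    (hnoneg : ∀ (ℓ : ℕ) (c : Fin (ℓ + 1) → V), IsCycle E c → 0 ≤ cycleWeight W c)
    (hΔpos : 0 < Δ)
    (hΔmin : ∀ (ℓ : ℕ) (c : Fin (ℓ + 1) → V), IsCycle E c → 0 < cycleWeight W c →
      Δ ≤ cycleWeight W c)
    (hΔex : ∃ (ℓ : ℕ) (c : Fin (ℓ + 1) → V), IsCycle E c ∧ cycleWeight W c = Δ)
    (ε : ℝ) (hε : ε = Δ / (Fintype.card V + 1)) :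
    ∀ (ℓ : ℕ) (c : Fin (ℓ + 1) → V),
      (∀ j : Fin (ℓ + 1), E (c j) (c (j + 1)) ∧ ¬ OnZeroCycle E W (c j) (c (j + 1))) →
      0 < ∑ j : Fin (ℓ + 1), (W (c j) (c (j + 1)) - ε) := by
  intro ℓ
  induction ℓ using Nat.strong_induction_on with
  | _ ℓ IH =>
  intro c hc
  by_cases hinj : Function.Injective c
  · -- simple cycle
    have hcyc : IsCycle E c := fun t => (hc t).1
    have hw0 : 0 ≤ cycleWeight W c := hnoneg ℓ c hcyc
    have hwne : cycleWeight W c ≠ 0 := fun h0 =>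
      (hc 0).2 ⟨ℓ, c, hcyc, h0, 0, rfl, rfl⟩
    have hwΔ : Δ ≤ cycleWeight W c := hΔmin ℓ c hcyc (lt_of_le_of_ne hw0 (Ne.symm hwne))
    have hcard : ℓ + 1 ≤ Fintype.card V := by
      have := Fintype.card_le_of_injective c hinj
      simpa using this
    have hsub : ∑ t : Fin (ℓ + 1), (W (c t) (c (t + 1)) - ε)
        = cycleWeight W c - (ℓ + 1 : ℝ) * ε := by
      rw [Finset.sum_sub_distrib, Finset.sum_const, Finset.card_univ, Fintype.card_fin,
        nsmul_eq_mul]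
      rw [cycleWeight]
      push_cast
      ring
    rw [hsub, hε]
    have hn1 : (0:ℝ) < (Fintype.card V : ℝ) + 1 := by positivity
    have hcc : ((ℓ:ℝ) + 1) ≤ (Fintype.card V : ℝ) := by exact_mod_cast hcard
    have hdm : Δ / ((Fintype.card V : ℝ) + 1) * ((Fintype.card V : ℝ) + 1) = Δ :=
      div_mul_cancel₀ Δ (ne_of_gt hn1)
    have hepos : 0 < Δ / ((Fintype.card V : ℝ) + 1) := by positivity
    nlinarith [hwΔ, hdm, hepos, hcc]
  · -- repeated vertex: split the cycle
    rw [Function.not_injective_iff] at hinj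
    obtain ⟨p, q, hpq, hne⟩ := hinj
    have hvne : p.val ≠ q.val := fun h => hne (Fin.ext h)
    have key : ∀ (i j : Fin (ℓ + 1)), i.val < j.val → c i = c j →
        0 < ∑ t : Fin (ℓ + 1), (W (c t) (c (t + 1)) - ε) := by
      intro i j hlt hceq
      obtain ⟨a, b, c1, c2, ha, hb, h1, h2, hsum⟩ :=
        cycle_split (fun x y => E x y ∧ ¬ OnZeroCycle E W x y)
          (fun x y => W x y - ε) c hc hlt hceq
      have p1 : 0 < ∑ t : Fin (a + 1), (W (c1 t) (c1 (t + 1)) - ε) :=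
        IH a (by omega) c1 h1
      have p2 : 0 < ∑ t : Fin (b + 1), (W (c2 t) (c2 (t + 1)) - ε) :=
        IH b (by omega) c2 h2
      exact lt_of_lt_of_eq (add_pos p1 p2) hsum.symm
    rcases Nat.lt_or_ge p.val q.val with h | h
    · exact key p q h hpq
    · exact key q p (by omega) hpq.symm
end

section
/- Consider items I = {a,b,c,d} and four agents: unit-demand agents 2, 3, 4 with v₂ = 2 on {a,b}, v₃ = 2 on {a,c}, v₄ = 1 on {d}, and agent 1 a coverage valuation with v₁({b}) = v₁({c}) = 2, v₁({a}) = v₁({d}) = 3, v₁({a,b}) = v₁({a,c}) = v₁({d,b}) = v₁({d,c}) = v₁({a,d}) = 3.5, v₁({a,b,d}) = v₁({a,c,d}) = 3.75, and v₁(S) = 4 whenever {b,c} ⊆ S. Then there is no item pricing p : I → ℝ≥0 under which every agent, arriving first, would uniquely (strictly) demand their bundle in the optimal allocation (a to agent 1, b to agent 2, c to agent 3, d to agent 4). Specifically, the conditions p(d) < 1, p(a) < p(d), p(b) < p(a), p(c) < p(a), and p(b) + p(c) − p(a) > 1 are jointly unsatisfiable. -/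
/-- The coverage representation of agent 1's valuation: sets covered by the four items
`a, b, c, d` (encoded `0, 1, 2, 3`) among eight ground elements. -/
def cover5 : Fin 4 → Finset (Fin 8) := ![{0, 1, 4, 5}, {0, 1, 2, 3}, {4, 5, 6, 7}, {0, 3, 4, 7}]

/-- The weights of the eight ground elements. -/
noncomputable def wt5 : Fin 8 → ℝ := ![5/4, 1/4, 1/4, 1/4, 5/4, 1/4, 1/4, 1/4]

/-- Agent 1's coverage valuation: `v₁(S)` is the total weight of the elements covered by `S`.
It satisfies `v₁({b}) = v₁({c}) = 2`, `v₁({a}) = v₁({d}) = 3`, `v₁({a,b}) = ⋯ = 3.5`,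
`v₁({a,b,d}) = v₁({a,c,d}) = 3.75`, and `v₁(S) = 4` whenever `{b,c} ⊆ S`. -/
noncomputable def v₁ (S : Finset (Fin 4)) : ℝ := ∑ e ∈ S.biUnion cover5, wt5 e

/-- Agent 2: unit demand, value 2 for any set meeting `{a, b}`. -/
def v₂ (S : Finset (Fin 4)) : ℝ := if (0 : Fin 4) ∈ S ∨ (1 : Fin 4) ∈ S then 2 else 0

/-- Agent 3: unit demand, value 2 for any set meeting `{a, c}`. -/
def v₃ (S : Finset (Fin 4)) : ℝ := if (0 : Fin 4) ∈ S ∨ (2 : Fin 4) ∈ S then 2 else 0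

/-- Agent 4: unit demand, value 1 for any set containing `d`. -/
def v₄ (S : Finset (Fin 4)) : ℝ := if (3 : Fin 4) ∈ S then 1 else 0

/-- Utility of a bundle `S` at item prices `p`. -/
def util5 (v : Finset (Fin 4) → ℝ) (p : Fin 4 → ℝ) (S : Finset (Fin 4)) : ℝ :=
  v S - ∑ j ∈ S, p j

/-- For the coverage-valuation instance, there is no nonnegative item pricing
under which each agent, arriving first, strictly uniquely demands her bundle in the (unique)
optimal allocation `a → 1, b → 2, c → 3, d → 4`; specifically, the necessary conditions
`p(d) < 1`, `p(a) < p(d)`, `p(b) < p(a)`, `p(c) < p(a)`, `p(b) + p(c) − p(a) > 1` are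
jointly unsatisfiable. -/
theorem stmt_5 :
    (¬ ∃ p : Fin 4 → ℝ, (∀ j, 0 ≤ p j) ∧
        (∀ S : Finset (Fin 4), S ≠ {0} → util5 v₁ p S < util5 v₁ p {0}) ∧
        (∀ S : Finset (Fin 4), S ≠ {1} → util5 v₂ p S < util5 v₂ p {1}) ∧
        (∀ S : Finset (Fin 4), S ≠ {2} → util5 v₃ p S < util5 v₃ p {2}) ∧
        (∀ S : Finset (Fin 4), S ≠ {3} → util5 v₄ p S < util5 v₄ p {3})) ∧
    (¬ ∃ pa pb pc pd : ℝ, 0 ≤ pa ∧ 0 ≤ pb ∧ 0 ≤ pc ∧ 0 ≤ pd ∧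
        pd < 1 ∧ pa < pd ∧ pb < pa ∧ pc < pa ∧ pb + pc - pa > 1) := by
  constructor
  · rintro ⟨p, _, h1, h2, h3, h4⟩
    have hb0 : ({0} : Finset (Fin 4)).biUnion cover5 = {0,1,4,5} := by decide
    have hb3 : ({3} : Finset (Fin 4)).biUnion cover5 = {0,3,4,7} := by decide
    have hb12 : ({1,2} : Finset (Fin 4)).biUnion cover5 = {0,1,2,3,4,5,6,7} := by decide
    have w0 : wt5 0 = 5/4 := rfl
    have w1 : wt5 1 = 1/4 := rfl
    have w2 : wt5 2 = 1/4 := rfl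
    have w3 : wt5 3 = 1/4 := rfl
    have w4 : wt5 4 = 5/4 := rfl
    have w5 : wt5 5 = 1/4 := rfl
    have w6 : wt5 6 = 1/4 := rfl
    have w7 : wt5 7 = 1/4 := rfl
    have sA : ∑ x ∈ ({0,1,4,5} : Finset (Fin 8)), wt5 x = 3 := by
      rw [Finset.sum_insert (by decide), Finset.sum_insert (by decide),
        Finset.sum_insert (by decide), Finset.sum_singleton]
      norm_num [w0, w1, w2, w3, w4, w5, w6, w7]
    have sB : ∑ x ∈ ({0,3,4,7} : Finset (Fin 8)), wt5 x = 3 := by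
      rw [Finset.sum_insert (by decide), Finset.sum_insert (by decide),
        Finset.sum_insert (by decide), Finset.sum_singleton]
      norm_num [w0, w1, w2, w3, w4, w5, w6, w7]
    have sC : ∑ x ∈ ({0,1,2,3,4,5,6,7} : Finset (Fin 8)), wt5 x = 4 := by
      rw [Finset.sum_insert (by decide), Finset.sum_insert (by decide),
        Finset.sum_insert (by decide), Finset.sum_insert (by decide),
        Finset.sum_insert (by decide), Finset.sum_insert (by decide),
        Finset.sum_insert (by decide), Finset.sum_singleton]
      norm_num [w0, w1, w2, w3, w4, w5, w6, w7]
    have sp : ∑ j ∈ ({1,2} : Finset (Fin 4)), p j = p 1 + p 2 := by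
      rw [Finset.sum_insert (by decide), Finset.sum_singleton]
    have e1 := h4 ∅ (by decide)
    have e2 := h1 {3} (by decide)
    have e3 := h2 {0} (by decide)
    have e4 := h3 {0} (by decide)
    have e5 := h1 {1, 2} (by decide)
    simp only [util5, v₄, Finset.notMem_empty, Finset.mem_singleton, if_pos rfl, if_neg,
      Finset.sum_empty, Finset.sum_singleton] at e1
    norm_num at e1
    simp only [util5, v₁, hb3, hb0, sB, sA, Finset.sum_singleton] at e2
    simp only [util5, v₂, v₃] at e3 e4
    norm_num [Finset.sum_singleton] at e3 e4
    simp only [util5, v₁, hb12, hb0, sC, sA, sp, Finset.sum_singleton] at e5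
    linarith
  · rintro ⟨pa, pb, pc, pd, _, _, _, _, h1, h2, h3, h4, h5⟩
    linarith
end

section
/- Let v₁,…,vₙ : 2^I → ℝ≥0 be monotone valuations with v_i(∅) = 0, let B₁,…,Bₙ be a partition of I with welfare W = ∑_i v_i(B_i), and set static bundle prices p(B_i) = v_i(B_i)/2. Suppose agents arrive in an arbitrary order and each agent i purchases a set x_i of still-available bundles maximizing u_i(x) = v_i(∪_{B∈x} B) − ∑_{B∈x} p(B) over all sets x of available bundles (with the empty set always available). Then the resulting total welfare ∑_i v_i(∪_{B∈x_i} B) is at least W/2. -/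
/-- The bundle indices still available when the agent at arrival position `k` arrives,
given the sets of bundle indices `x` purchased at each earlier position. -/
def avail6 {n : ℕ} (x : Fin n → Finset (Fin n)) (k : Fin n) : Finset (Fin n) :=
  Finset.univ \ (Finset.univ.filter (· < k)).biUnion x

/-- items `I`, monotone nonnegative normalized valuations `v₁, …, vₙ`, a partition
`B₁, …, Bₙ` of `I` with welfare `W = ∑ᵢ vᵢ(Bᵢ)`, and static bundle prices `p(Bᵢ) = vᵢ(Bᵢ)/2`.
If agents arrive in an arbitrary order `σ` and each agent purchases a utility-maximizing set of
still-available bundles, the resulting welfare is at least `W/2`. -/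
theorem stmt_6 {I : Type*} [Fintype I] [DecidableEq I] (n : ℕ)
    (v : Fin n → Finset I → ℝ)
    (hmono : ∀ i, ∀ S T : Finset I, S ⊆ T → v i S ≤ v i T)
    (hnn : ∀ i S, 0 ≤ v i S) (hempty : ∀ i, v i ∅ = 0)
    (B : Fin n → Finset I)
    (hdisj : ∀ i j, i ≠ j → Disjoint (B i) (B j))
    (hcover : Finset.univ.biUnion B = (Finset.univ : Finset I))
    (σ : Equiv.Perm (Fin n))
    (x : Fin n → Finset (Fin n))
    (hx : ∀ k : Fin n, x k ⊆ avail6 x k ∧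
      ∀ y ⊆ avail6 x k,
        v (σ k) (y.biUnion B) - ∑ j ∈ y, v j (B j) / 2 ≤
          v (σ k) ((x k).biUnion B) - ∑ j ∈ x k, v j (B j) / 2) :
    (∑ i, v i (B i)) / 2 ≤ ∑ k, v (σ k) ((x k).biUnion B) := by
  classical
  set p : Fin n → ℝ := fun j => v j (B j) / 2 with hp
  set u : Fin n → ℝ := fun k => v (σ k) ((x k).biUnion B) - ∑ j ∈ x k, p j with hu
  have hu0 : ∀ k, 0 ≤ u k := by
    intro k
    have h := (hx k).2 ∅ (by simp)
    simpa [hu, hp, hempty] using h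
  have hxd : ∀ k k' : Fin n, k' < k → ∀ j ∈ x k, j ∉ x k' := by
    intro k k' hlt j hj hj'
    have h := (hx k).1 hj
    simp only [avail6, Finset.mem_sdiff, Finset.mem_biUnion, Finset.mem_filter,
      Finset.mem_univ, true_and, not_exists, not_and] at h
    exact h k' hlt hj'
  have hdisjx : ((Finset.univ : Finset (Fin n)) : Set (Fin n)).PairwiseDisjoint x := by
    intro a _ b _ hab
    rcases lt_or_gt_of_ne hab with h | h
    · exact Finset.disjoint_left.mpr (fun j hj hj' => hxd b a h j hj' hj)
    · exact Finset.disjoint_left.mpr (fun j hj hj' => hxd a b h j hj hj')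
  set S : Finset (Fin n) := Finset.univ.biUnion x with hS
  have hsold : ∑ j ∈ S, p j = ∑ k, ∑ j ∈ x k, p j :=
    Finset.sum_biUnion hdisjx
  have hunsold : ∀ j ∉ S, p j ≤ u (σ.symm j) := by
    intro j hj
    have hjav : ({j} : Finset (Fin n)) ⊆ avail6 x (σ.symm j) := by
      intro a ha
      rw [Finset.mem_singleton] at ha; subst ha
      simp only [avail6, Finset.mem_sdiff, Finset.mem_biUnion, Finset.mem_filter,
        Finset.mem_univ, true_and, not_exists, not_and]
      exact fun k _ hjx => hj (Finset.mem_biUnion.mpr ⟨k, Finset.mem_univ _, hjx⟩)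
    have h := (hx (σ.symm j)).2 {j} hjav
    simp only [Finset.singleton_biUnion, Finset.sum_singleton,
      Equiv.apply_symm_apply] at h
    have hpj : v j (B j) - v j (B j) / 2 = p j := by simp [hp]; ring
    calc p j = v j (B j) - v j (B j) / 2 := hpj.symm
      _ ≤ _ := h
      _ = u (σ.symm j) := by simp [hu]
  have hsplit : ∑ j ∈ S, p j + ∑ j ∈ Sᶜ, p j = ∑ j, p j :=
    Finset.sum_add_sum_compl S p
  have h1 : ∑ j ∈ Sᶜ, p j ≤ ∑ j ∈ Sᶜ, u (σ.symm j) :=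
    Finset.sum_le_sum (fun j hj => hunsold j (by simpa using hj))
  have h2 : ∑ j ∈ Sᶜ, u (σ.symm j) ≤ ∑ j, u (σ.symm j) :=
    Finset.sum_le_sum_of_subset_of_nonneg (Finset.subset_univ _) (fun j _ _ => hu0 _)
  have h3 : ∑ j, u (σ.symm j) = ∑ k, u k := Equiv.sum_comp σ.symm u
  have hw : ∑ k, v (σ k) ((x k).biUnion B) = ∑ k, u k + ∑ j ∈ S, p j := by
    rw [hsold, ← Finset.sum_add_distrib]
    refine Finset.sum_congr rfl (fun k _ => ?_)
    simp [hu]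
  have hW : (∑ i, v i (B i)) / 2 = ∑ j, p j := by
    rw [Finset.sum_div]
  rw [hW, hw, ← hsplit]
  linarith [h1.trans (h2.trans_eq h3)]
end

section
/- Suppose valuations v₁,…,vₙ over items I admit a unique welfare-maximizing partition B = {B₁,…,Bₙ} of bundles. If there exists a dynamic bundle-pricing scheme that guarantees the optimal allocation for every arrival order and every tie-breaking, then the initial (first-round) prices, used statically throughout, also guarantee the optimal allocation for every arrival order and every tie-breaking. -/
variable {I : Type*} [Fintype I] [DecidableEq I]

/-- Union of a set of bundles. -/
def bun (x : Finset (Finset I)) : Finset I := x.biUnion id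

/-- Utility of a set of bundles `x` for valuation `v` at bundle prices `pr`. -/
def butil (v : Finset I → ℝ) (pr : Finset I → ℝ) (x : Finset (Finset I)) : ℝ :=
  v (bun x) - ∑ b ∈ x, pr b

/-- The items sold in a history (a list of (agent, purchased set of bundles) pairs). -/
def soldOf (h : List (ℕ × Finset (Finset I))) : Finset I :=
  (h.map (fun q => bun q.2)).foldr (· ∪ ·) ∅

/-- The history of the first `t` steps of a run: arrival order `σ`, purchases `x`.  Agents are
recorded as pairs `⟨n, i⟩`. -/
def histUpTo (n : ℕ) (σ : Equiv.Perm (Fin n)) (x : Fin n → Finset (Finset I)) :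
    ℕ → List (ℕ × Finset (Finset I))
  | 0 => []
  | k + 1 =>
      histUpTo n σ x k ++ (if h : k < n then [(((σ ⟨k, h⟩ : Fin n) : ℕ), x ⟨k, h⟩)] else [])

/-- A dynamic bundle-pricing scheme: from any history it produces a partition of the remaining
items into bundles, with prices. -/
def SchemeValid (n : ℕ) (scheme : List (ℕ × Finset (Finset I)) →
    Finset (Finset I) × (Finset I → ℝ)) : Prop :=
  ∀ h, (scheme h).1.biUnion id = Finset.univ \ soldOf h ∧
    (∀ b₁ ∈ (scheme h).1, ∀ b₂ ∈ (scheme h).1, b₁ ≠ b₂ → Disjoint b₁ b₂) ∧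
    (∀ b ∈ (scheme h).1, 0 ≤ (scheme h).2 b)

/-- A valid run of a dynamic scheme: at each step `k`, the arriving agent `σ k` buys a
utility-maximizing set `x k` of the posted bundles (ties broken arbitrarily). -/
def ValidDynRun (n : ℕ) (v : Fin n → Finset I → ℝ)
    (scheme : List (ℕ × Finset (Finset I)) → Finset (Finset I) × (Finset I → ℝ))
    (σ : Equiv.Perm (Fin n)) (x : Fin n → Finset (Finset I)) : Prop :=
  ∀ k : Fin n,
    x k ⊆ (scheme (histUpTo n σ x k)).1 ∧
      ∀ y ⊆ (scheme (histUpTo n σ x k)).1,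
        butil (v (σ k)) (scheme (histUpTo n σ x k)).2 y ≤
          butil (v (σ k)) (scheme (histUpTo n σ x k)).2 (x k)

/-- A valid run of a *static* bundle pricing `(P, pr)`: at each step the arriving agent buys a
utility-maximizing set of the not-yet-sold bundles. -/
def ValidStaticRun (n : ℕ) (v : Fin n → Finset I → ℝ)
    (P : Finset (Finset I)) (pr : Finset I → ℝ)
    (σ : Equiv.Perm (Fin n)) (x : Fin n → Finset (Finset I)) : Prop :=
  ∀ k : Fin n,
    x k ⊆ P \ (Finset.univ.filter (· < k)).biUnion x ∧
      ∀ y ⊆ P \ (Finset.univ.filter (· < k)).biUnion x,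
        butil (v (σ k)) pr y ≤ butil (v (σ k)) pr (x k)

/-- Auxiliary: the history generated by running a "pick" rule along order `σ`. -/
def runHist (n : ℕ) (pick : List (ℕ × Finset (Finset I)) → Fin n → Finset (Finset I))
    (σ : Equiv.Perm (Fin n)) : ℕ → List (ℕ × Finset (Finset I))
  | 0 => []
  | k + 1 => runHist n pick σ k ++
      (if h : k < n then
        [(((σ ⟨k, h⟩ : Fin n) : ℕ), pick (runHist n pick σ k) (σ ⟨k, h⟩))] else [])

lemma runHist_eq_histUpTo (n : ℕ)
    (pick : List (ℕ × Finset (Finset I)) → Fin n → Finset (Finset I))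
    (σ : Equiv.Perm (Fin n)) :
    ∀ m, histUpTo n σ (fun j => pick (runHist n pick σ j.val) (σ j)) m
      = runHist n pick σ m := by
  intro m
  induction m with
  | zero => rfl
  | succ k ih => simp only [histUpTo, runHist, ih]

/-- Suppose the valuations admit a unique welfare-maximizing partition
`B = (B₁, …, Bₙ)`.  If a dynamic bundle-pricing scheme guarantees that in every valid run each
agent receives exactly her optimal bundle, then its initial (first-round) bundles and prices,
used statically throughout, also guarantee the optimal allocation for every arrival order and
tie-breaking. -/
theorem stmt_7 (n : ℕ) (v : Fin n → Finset I → ℝ)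
    (hmono : ∀ i, ∀ S T : Finset I, S ⊆ T → v i S ≤ v i T)
    (hnn : ∀ i S, 0 ≤ v i S) (hempty : ∀ i, v i ∅ = 0)
    (B : Fin n → Finset I)
    (hdisj : ∀ i j, i ≠ j → Disjoint (B i) (B j))
    (hunique : ∀ B' : Fin n → Finset I, (∀ i j, i ≠ j → Disjoint (B' i) (B' j)) →
      B' ≠ B → ∑ i, v i (B' i) < ∑ i, v i (B i))
    (scheme : List (ℕ × Finset (Finset I)) → Finset (Finset I) × (Finset I → ℝ))
    (hscheme : SchemeValid n scheme)
    (hdynopt : ∀ (σ : Equiv.Perm (Fin n)) (x : Fin n → Finset (Finset I)),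
      ValidDynRun n v scheme σ x → ∀ k : Fin n, bun (x k) = B (σ k)) :
    ∀ (σ : Equiv.Perm (Fin n)) (x : Fin n → Finset (Finset I)),
      ValidStaticRun n v (scheme []).1 (scheme []).2 σ x →
        ∀ k : Fin n, bun (x k) = B (σ k) := by
  classical
  -- existence of a utility maximizer over subsets of any bundle set
  have exists_max : ∀ (i : Fin n) (Q : Finset (Finset I)) (q : Finset I → ℝ),
      ∃ z, z ⊆ Q ∧ ∀ w ⊆ Q, butil (v i) q w ≤ butil (v i) q z := by
    intro i Q q
    obtain ⟨z, hz, hmax⟩ := Finset.exists_max_image Q.powerset (butil (v i) q)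
      ⟨∅, Finset.empty_mem_powerset _⟩
    exact ⟨z, Finset.mem_powerset.mp hz,
      fun w hw => hmax w (Finset.mem_powerset.mpr hw)⟩
  have hex : ∀ (h : List (ℕ × Finset (Finset I))) (j : Fin n),
      ∃ z, z ⊆ (scheme h).1 ∧ ∀ w ⊆ (scheme h).1,
        butil (v j) (scheme h).2 w ≤ butil (v j) (scheme h).2 z :=
    fun h j => exists_max j _ _
  choose pickc hpc1 hpc2 using hex
  -- CLAIM A: any first-round maximizer for agent i buys exactly B i
  have claimA : ∀ (i : Fin n) (y : Finset (Finset I)),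
      y ⊆ (scheme []).1 →
      (∀ z ⊆ (scheme []).1, butil (v i) (scheme []).2 z ≤ butil (v i) (scheme []).2 y) →
      bun y = B i := by
    intro i y hyP hymax
    set pick : List (ℕ × Finset (Finset I)) → Fin n → Finset (Finset I) :=
      fun h j => if h = [] ∧ j = i then y else pickc h j with hpickdef
    have hpick : ∀ h j, pick h j ⊆ (scheme h).1 ∧
        ∀ w ⊆ (scheme h).1,
          butil (v j) (scheme h).2 w ≤ butil (v j) (scheme h).2 (pick h j) := by
      intro h j
      by_cases hc : h = [] ∧ j = i
      · have he : pick h j = y := by rw [hpickdef]; exact if_pos hc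
        rw [he, hc.1, hc.2]
        exact ⟨hyP, hymax⟩
      · have he : pick h j = pickc h j := by rw [hpickdef]; exact if_neg hc
        rw [he]
        exact ⟨hpc1 h j, hpc2 h j⟩
    set σ' : Equiv.Perm (Fin n) := Equiv.swap ⟨0, i.pos⟩ i with hσ'
    set x' : Fin n → Finset (Finset I) :=
      fun j => pick (runHist n pick σ' j.val) (σ' j) with hx'def
    have hhist : ∀ m, histUpTo n σ' x' m = runHist n pick σ' m :=
      runHist_eq_histUpTo n pick σ'
    have hrun : ValidDynRun n v scheme σ' x' := by
      intro k
      rw [hhist k]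
      exact hpick (runHist n pick σ' k) (σ' k)
    have h0 := hdynopt σ' x' hrun ⟨0, i.pos⟩
    have hσ0 : σ' ⟨0, i.pos⟩ = i := Equiv.swap_apply_left _ _
    have hrh0 : runHist n pick σ' 0 = [] := rfl
    have hx0 : x' ⟨0, i.pos⟩ = y := by
      rw [hx'def]
      simp only [hrh0, hσ0]
      exact if_pos ⟨rfl, rfl⟩
    rw [hx0, hσ0] at h0
    exact h0
  -- static part
  intro σ x hstatic
  have key : ∀ k : Fin n, (∀ j : Fin n, j < k → bun (x j) = B (σ j)) →
      bun (x k) = B (σ k) := by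
    intro k IH
    obtain ⟨hsub, hmax⟩ := hstatic k
    obtain ⟨ys, hysP, hysmax⟩ := exists_max (σ k) (scheme []).1 (scheme []).2
    have hbunys : bun ys = B (σ k) := claimA _ _ hysP hysmax
    set S := (Finset.univ.filter (· < k)).biUnion x with hS
    -- removed bundles are empty
    have hrem : ∀ b ∈ ys, b ∈ S → b = ∅ := by
      intro b hb hbS
      obtain ⟨j, hj, hbj⟩ := Finset.mem_biUnion.mp hbS
      have hjk : j < k := (Finset.mem_filter.mp hj).2
      have h1 : b ⊆ B (σ k) := by
        rw [← hbunys]; exact Finset.subset_biUnion_of_mem id hb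
      have h2 : b ⊆ B (σ j) := by
        rw [← IH j hjk]; exact Finset.subset_biUnion_of_mem id hbj
      have hd : Disjoint (B (σ j)) (B (σ k)) :=
        hdisj _ _ (fun h => (ne_of_lt hjk) (σ.injective h))
      exact Finset.eq_empty_iff_forall_notMem.mpr
        (fun a ha => Finset.disjoint_left.mp hd (h2 ha) (h1 ha))
    set y' := ys \ S with hy'
    have hbun' : bun y' = bun ys := by
      apply Finset.Subset.antisymm
      · exact Finset.biUnion_subset_biUnion_of_subset_left id Finset.sdiff_subset
      · intro a ha
        obtain ⟨b, hb, hab⟩ := Finset.mem_biUnion.mp ha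
        refine Finset.mem_biUnion.mpr ⟨b, ?_, hab⟩
        rw [hy', Finset.mem_sdiff]
        refine ⟨hb, fun hbS => ?_⟩
        have := hrem b hb hbS
        rw [this] at hab
        exact absurd hab (Finset.notMem_empty a)
    have hprice : ∑ b ∈ y', (scheme []).2 b ≤ ∑ b ∈ ys, (scheme []).2 b :=
      Finset.sum_le_sum_of_subset_of_nonneg Finset.sdiff_subset
        (fun b hb _ => (hscheme []).2.2 b (hysP hb))
    have hy'util : butil (v (σ k)) (scheme []).2 ys ≤ butil (v (σ k)) (scheme []).2 y' := by
      simp only [butil, hbun']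
      linarith
    have hy'sub : y' ⊆ (scheme []).1 \ S := by
      intro b hb
      rw [hy', Finset.mem_sdiff] at hb
      exact Finset.mem_sdiff.mpr ⟨hysP hb.1, hb.2⟩
    have h1 : butil (v (σ k)) (scheme []).2 y' ≤ butil (v (σ k)) (scheme []).2 (x k) :=
      hmax y' hy'sub
    have hxkmax : ∀ z ⊆ (scheme []).1,
        butil (v (σ k)) (scheme []).2 z ≤ butil (v (σ k)) (scheme []).2 (x k) :=
      fun z hz => le_trans (hysmax z hz) (le_trans hy'util h1)
    exact claimA (σ k) (x k) (hsub.trans Finset.sdiff_subset) hxkmax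
  have final : ∀ m : ℕ, ∀ k : Fin n, k.val ≤ m → bun (x k) = B (σ k) := by
    intro m
    induction m with
    | zero =>
        intro k hk
        exact key k (fun j hj => absurd (Fin.lt_def.mp hj) (by omega))
    | succ m ih =>
        intro k hk
        refine key k (fun j hj => ih j ?_)
        have := Fin.lt_def.mp hj
        omega
  exact fun k => final k.val k le_rfl
end

section
/- Let v : 2^I → ℝ≥0 be a gross substitutes valuation (satisfying the local improvement property), and let p : I → ℝ≥0 be item prices such that the demand set D(I,p) = argmax_{S⊆I} (v(S) − ∑_{j∈S} p(j)) contains some set A and |D(I,p)| > 1. Then there exists B ∈ local(A) with B ∈ D(I,p), where local(A) = { B ≠ A ⊆ I : |B \ A| ≤ 1 and |A \ B| ≤ 1 }. -/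
/-- `localSet A`: all sets obtained from `A` by adding at most one item and removing at most
one item (other than `A` itself). -/
def localSet {I : Type*} [DecidableEq I] (A : Finset I) : Set (Finset I) :=
  {B | B ≠ A ∧ (B \ A).card ≤ 1 ∧ (A \ B).card ≤ 1}

/-- The demand correspondence of a valuation `v` at item prices `p`. -/
def demand {I : Type*} [Fintype I] [DecidableEq I] (v : Finset I → ℝ) (p : I → ℝ) :
    Set (Finset I) :=
  {S | ∀ T : Finset I, v T - ∑ j ∈ T, p j ≤ v S - ∑ j ∈ S, p j}

/-- The local improvement (LI) property of gross substitutes valuations: at any nonnegative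
item prices, any bundle not in the demand set admits a strictly improving local change. -/
def LocalImprovement {I : Type*} [Fintype I] [DecidableEq I] (v : Finset I → ℝ) : Prop :=
  ∀ p : I → ℝ, (∀ j, 0 ≤ p j) → ∀ A : Finset I, A ∉ demand v p →
    ∃ B ∈ localSet A, v A - ∑ j ∈ A, p j < v B - ∑ j ∈ B, p j

/-- Utility of a bundle at given prices. -/
def util {I : Type*} [DecidableEq I] (v : Finset I → ℝ) (p : I → ℝ) (S : Finset I) : ℝ :=
  v S - ∑ j ∈ S, p j

lemma mem_demand {I : Type*} [Fintype I] [DecidableEq I] (v : Finset I → ℝ) (p : I → ℝ)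
    (S : Finset I) : S ∈ demand v p ↔ ∀ T : Finset I, util v p T ≤ util v p S := Iff.rfl

lemma sum_ite_card {I : Type*} [DecidableEq I] (S T : Finset I) (c : ℝ) :
    ∑ j ∈ S, (if j ∈ T then c else 0) = c * (S ∩ T).card := by
  rw [Finset.sum_ite_mem, Finset.sum_const, nsmul_eq_mul, mul_comm]

/-- for a gross substitutes valuation (satisfying the LI property) and
nonnegative prices `p`, if `A` is demanded but not uniquely demanded, then some local neighbor
of `A` is also demanded. -/
theorem stmt_10 {I : Type*} [Fintype I] [DecidableEq I]
    (v : Finset I → ℝ) (hnn : ∀ S, 0 ≤ v S)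
    (hLI : LocalImprovement v)
    (p : I → ℝ) (hp : ∀ j, 0 ≤ p j)
    (A : Finset I) (hA : A ∈ demand v p)
    (hmulti : ∃ C ∈ demand v p, C ≠ A) :
    ∃ B ∈ localSet A, B ∈ demand v p := by
  classical
  by_contra hcon
  push_neg at hcon
  obtain ⟨C, hC, hCA⟩ := hmulti
  have hLI' : ∀ q : I → ℝ, (∀ j, 0 ≤ q j) → ∀ S : Finset I, S ∉ demand v q →
      ∃ B ∈ localSet S, util v q S < util v q B := hLI
  have hAmax : ∀ T, util v p T ≤ util v p A := hA
  have hueq : ∀ {S : Finset I}, S ∈ demand v p → util v p S = util v p A :=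
    fun {S} hS => le_antisymm (hAmax _) (hS A)
  have hndlt : ∀ S : Finset I, S ∉ demand v p → util v p S < util v p A := by
    intro S hS
    rw [mem_demand] at hS
    push_neg at hS
    obtain ⟨T, hT⟩ := hS
    exact lt_of_lt_of_le hT (hAmax T)
  have hutil_nn : ∀ S : Finset I, util v p S ≤ v S := by
    intro S
    have : 0 ≤ ∑ j ∈ S, p j := Finset.sum_nonneg fun j _ => hp j
    rw [util]; linarith
  have huA0 : 0 ≤ util v p A := by
    have h1 : util v p ∅ ≤ util v p A := hAmax ∅
    have h2 : util v p ∅ = v ∅ := by simp [util]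
    have := hnn ∅
    linarith
  -- local set of A is nonempty
  have hlocal_ne : ∃ B₀, B₀ ∈ localSet A := by
    have hne : A ≠ C := hCA.symm
    obtain ⟨x, hx⟩ := Finset.symmDiff_nonempty.mpr hne
    rw [Finset.mem_symmDiff] at hx
    rcases hx with ⟨hxA, _⟩ | ⟨_, hxA⟩
    · refine ⟨A.erase x, ?_, ?_, ?_⟩
      · exact (Finset.erase_ne_self.mpr hxA)
      · simp [Finset.sdiff_eq_empty_iff_subset.mpr (Finset.erase_subset x A)]
      · have : A \ A.erase x = {x} := Finset.sdiff_erase_self hxA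
        simp [this]
    · refine ⟨insert x A, ?_, ?_, ?_⟩
      · intro h; exact hxA (h ▸ Finset.mem_insert_self x A)
      · have : insert x A \ A = {x} := by
          rw [Finset.insert_sdiff_of_notMem _ hxA]
          simp [Finset.sdiff_eq_empty_iff_subset.mpr (Finset.Subset.refl A)]
        simp [this]
      · simp [Finset.sdiff_eq_empty_iff_subset.mpr (Finset.subset_insert x A)]
  obtain ⟨B₀, hB₀⟩ := hlocal_ne
  -- the finset of local neighbors and the gap g
  obtain ⟨L, hLdef⟩ : ∃ L : Finset (Finset I),
      L = Finset.univ.filter (fun B => B ∈ localSet A) := ⟨_, rfl⟩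
  have hLne : L.Nonempty := ⟨B₀, by simp [hLdef, hB₀]⟩
  have hLlt : ∀ B ∈ L, util v p B < util v p A := by
    intro B hB
    rw [hLdef, Finset.mem_filter] at hB
    exact hndlt B (hcon B hB.2)
  obtain ⟨g, hgdef⟩ : ∃ g : ℝ, g = util v p A - L.sup' hLne (util v p) := ⟨_, rfl⟩
  have hg : 0 < g := by
    have : L.sup' hLne (util v p) < util v p A := (Finset.sup'_lt_iff hLne).mpr hLlt
    rw [hgdef]; linarith
  have hsupL : ∀ B ∈ localSet A, util v p B ≤ util v p A - g := by
    intro B hB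
    have : util v p B ≤ L.sup' hLne (util v p) :=
      Finset.le_sup' (util v p) (by simp [hLdef, hB])
    rw [hgdef]; linarith
  by_cases hcase : ∃ C', C' ∈ demand v p ∧ (A \ C').Nonempty
  · -- Case (a)
    obtain ⟨C', hC', hAC'⟩ := hcase
    obtain ⟨k, hkdef⟩ : ∃ k : ℕ, k = (A \ C').card := ⟨_, rfl⟩
    have hk : 0 < k := hkdef ▸ Finset.card_pos.mpr hAC'
    have hk' : (0:ℝ) < (k:ℝ) := by exact_mod_cast hk
    obtain ⟨ε, hεdef⟩ : ∃ ε : ℝ, ε = g / (2 * k) := ⟨_, rfl⟩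
    have hε : 0 < ε := by
      rw [hεdef]
      positivity
    obtain ⟨q, hqdef⟩ : ∃ q : I → ℝ,
        q = fun j => p j + (if j ∈ A \ C' then ε else 0) := ⟨_, rfl⟩
    have hqnn : ∀ j, 0 ≤ q j := by
      intro j; rw [hqdef]
      have := hp j
      dsimp only
      split <;> linarith
    have hqsum : ∀ S : Finset I, util v q S
        = util v p S - ε * ((S ∩ (A \ C')).card : ℝ) := by
      intro S
      simp only [util, hqdef, Finset.sum_add_distrib, sum_ite_card]
      ring
    have hAq : util v q A = util v p A - ε * (k : ℝ) := by
      rw [hqsum, Finset.inter_eq_right.mpr Finset.sdiff_subset, hkdef]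
    have hC'q : util v q C' = util v p C' := by
      rw [hqsum, Finset.inter_sdiff_self, Finset.card_empty]
      simp
    have hAnd : A ∉ demand v q := by
      rw [mem_demand]
      push_neg
      refine ⟨C', ?_⟩
      rw [hAq, hC'q, hueq hC']
      have h2 : 0 < ε * (k : ℝ) := by positivity
      linarith
    obtain ⟨B, hBl, hBlt⟩ := hLI' q hqnn A hAnd
    have hBin : util v q B ≤ util v p B := by
      rw [hqsum]
      have : 0 ≤ ε * ((B ∩ (A \ C')).card : ℝ) := by positivity
      linarith
    have hεk : ε * (k : ℝ) = g / 2 := by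
      rw [hεdef]
      field_simp
    have h5 := hsupL B hBl
    rw [hAq] at hBlt
    linarith
  · -- Case (b)
    push_neg at hcase
    have hsub : ∀ S, S ∈ demand v p → A ⊆ S := by
      intro S hS
      have := hcase S hS
      rw [Finset.sdiff_eq_empty_iff_subset] at this
      exact this
    obtain ⟨D', hD'def⟩ : ∃ D' : Finset (Finset I),
        D' = Finset.univ.filter (fun S => S ∈ demand v p ∧ S ≠ A) := ⟨_, rfl⟩
    have hD'ne : D'.Nonempty := ⟨C, by simp [hD'def, hC, hCA]⟩
    obtain ⟨C₀, hC₀mem, hC₀min⟩ := Finset.exists_min_image D' (fun S => (S \ A).card) hD'ne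
    rw [hD'def, Finset.mem_filter] at hC₀mem
    have hC₀d : C₀ ∈ demand v p := hC₀mem.2.1
    have hC₀ne : C₀ ≠ A := hC₀mem.2.2
    have hAC₀ : A ⊆ C₀ := hsub C₀ hC₀d
    obtain ⟨m, hmdef⟩ : ∃ m : ℕ, m = (C₀ \ A).card := ⟨_, rfl⟩
    have hm1 : 1 ≤ m := by
      rw [hmdef, Nat.one_le_iff_ne_zero, Ne, Finset.card_eq_zero,
        Finset.sdiff_eq_empty_iff_subset]
      intro h
      exact hC₀ne (Finset.Subset.antisymm h hAC₀)
    have hm2 : 2 ≤ m := by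
      rcases Nat.lt_or_ge m 2 with h | h
      · exfalso
        apply hcon C₀ _ hC₀d
        refine ⟨hC₀ne, by rw [← hmdef]; omega, ?_⟩
        rw [Finset.sdiff_eq_empty_iff_subset.mpr hAC₀]
        simp
      · exact h
    have hm' : (0:ℝ) < (m:ℝ) := by exact_mod_cast lt_of_lt_of_le one_pos hm1
    -- gap over non-demanded sets
    obtain ⟨N, hNdef⟩ : ∃ N : Finset (Finset I),
        N = Finset.univ.filter (fun S => S ∉ demand v p) := ⟨_, rfl⟩
    have hNne : N.Nonempty := ⟨B₀, by simp [hNdef, hcon B₀ hB₀]⟩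
    have hNlt : ∀ S ∈ N, util v p S < util v p A := by
      intro S hS
      rw [hNdef, Finset.mem_filter] at hS
      exact hndlt S hS.2
    obtain ⟨G, hGdef⟩ : ∃ G : ℝ, G = util v p A - N.sup' hNne (util v p) := ⟨_, rfl⟩
    have hG : 0 < G := by
      have : N.sup' hNne (util v p) < util v p A := (Finset.sup'_lt_iff hNne).mpr hNlt
      rw [hGdef]; linarith
    have hsupN : ∀ S, S ∉ demand v p → util v p S ≤ util v p A - G := by
      intro S hS
      have : util v p S ≤ N.sup' hNne (util v p) :=
        Finset.le_sup' (util v p) (by simp [hNdef, hS])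
      rw [hGdef]; linarith
    obtain ⟨δ, hδdef⟩ : ∃ δ : ℝ, δ = G / 2 := ⟨_, rfl⟩
    have hδ : 0 < δ := by rw [hδdef]; positivity
    have hδG : δ < G := by rw [hδdef]; linarith
    obtain ⟨maxv, hmaxdef⟩ : ∃ x : ℝ,
        x = Finset.univ.sup' ⟨∅, Finset.mem_univ ∅⟩ v := ⟨_, rfl⟩
    have hmax : ∀ S : Finset I, v S ≤ maxv :=
      fun S => hmaxdef ▸ Finset.le_sup' v (Finset.mem_univ S)
    obtain ⟨M, hMdef⟩ : ∃ M : ℝ, M = maxv + δ * m + 1 := ⟨_, rfl⟩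
    have hM0 : 0 ≤ M := by
      have h1 : 0 ≤ maxv := le_trans (hnn ∅) (hmax ∅)
      have h2 : 0 ≤ δ * (m : ℝ) := by positivity
      rw [hMdef]; linarith
    obtain ⟨q, hqdef⟩ : ∃ q : I → ℝ, q = fun j => p j + (if j ∈ C₀ \ A then δ else 0)
      + (if j ∈ (C₀ᶜ : Finset I) then M else 0) := ⟨_, rfl⟩
    have hqnn : ∀ j, 0 ≤ q j := by
      intro j; rw [hqdef]
      have := hp j
      dsimp only
      split <;> split <;> linarith
    have hqsum : ∀ S : Finset I, util v q S
        = util v p S - δ * ((S ∩ (C₀ \ A)).card : ℝ)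
          - M * ((S ∩ (C₀ᶜ : Finset I)).card : ℝ) := by
      intro S
      simp only [util, hqdef, Finset.sum_add_distrib, sum_ite_card]
      ring
    have hAq : util v q A = util v p A := by
      rw [hqsum]
      have h1 : A ∩ (C₀ \ A) = ∅ := Finset.inter_sdiff_self A C₀
      have h2 : A ∩ (C₀ᶜ : Finset I) = ∅ := by
        rw [Finset.eq_empty_iff_forall_notMem]
        intro x hx
        rw [Finset.mem_inter, Finset.mem_compl] at hx
        exact hx.2 (hAC₀ hx.1)
      rw [h1, h2]; simp
    have hC₀q : util v q C₀ = util v p C₀ - δ * (m : ℝ) := by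
      rw [hqsum]
      have h1 : C₀ ∩ (C₀ \ A) = C₀ \ A := Finset.inter_eq_right.mpr Finset.sdiff_subset
      have h2 : C₀ ∩ (C₀ᶜ : Finset I) = ∅ := by simp
      rw [h1, h2, ← hmdef]; simp
    have huC₀ : util v p C₀ = util v p A := hueq hC₀d
    have hC₀nd : C₀ ∉ demand v q := by
      rw [mem_demand]
      push_neg
      refine ⟨A, ?_⟩
      rw [hAq, hC₀q, huC₀]
      have h2 : 0 < δ * (m : ℝ) := by positivity
      linarith
    obtain ⟨B, hBl, hBlt⟩ := hLI' q hqnn C₀ hC₀nd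
    rw [hC₀q] at hBlt
    by_cases hBC₀ : B ⊆ C₀
    · -- improver is C₀ minus one element
      have hBC₀ne : B ≠ C₀ := hBl.1
      have hBcompl : B ∩ (C₀ᶜ : Finset I) = ∅ := by
        rw [Finset.eq_empty_iff_forall_notMem]
        intro x hx
        rw [Finset.mem_inter, Finset.mem_compl] at hx
        exact hx.2 (hBC₀ hx.1)
      have hcard1 : (C₀ \ B).card ≤ 1 := hBl.2.2
      have hcardge : (m : ℝ) - 1 ≤ ((B ∩ (C₀ \ A)).card : ℝ) := by
        have hsub2 : C₀ \ A ⊆ (B ∩ (C₀ \ A)) ∪ (C₀ \ B) := by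
          intro x hx
          rw [Finset.mem_union, Finset.mem_inter]
          by_cases hxB : x ∈ B
          · exact Or.inl ⟨hxB, hx⟩
          · exact Or.inr (Finset.mem_sdiff.mpr ⟨(Finset.mem_sdiff.mp hx).1, hxB⟩)
        have h1 := Finset.card_le_card hsub2
        have h2 := Finset.card_union_le (B ∩ (C₀ \ A)) (C₀ \ B)
        have hm'' : m ≤ (B ∩ (C₀ \ A)).card + 1 := by rw [hmdef]; omega
        have : (m : ℝ) ≤ ((B ∩ (C₀ \ A)).card : ℝ) + 1 := by exact_mod_cast hm''
        linarith
      have hBq : util v q B ≤ util v p B - δ * ((m : ℝ) - 1) := by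
        rw [hqsum, hBcompl]
        have : δ * ((m:ℝ) - 1) ≤ δ * ((B ∩ (C₀ \ A)).card : ℝ) :=
          mul_le_mul_of_nonneg_left hcardge hδ.le
        simp only [Finset.card_empty, Nat.cast_zero, mul_zero]
        linarith
      -- so util B > util A - δ, hence B is demanded
      have hBgt : util v p A - δ < util v p B := by
        have hδm : δ * (m:ℝ) - δ * ((m:ℝ) - 1) = δ := by ring
        linarith
      have hBd : B ∈ demand v p := by
        by_contra hBnd
        have := hsupN B hBnd
        linarith
      -- B is a demanded proper superset of A with smaller difference: contradiction
      have hABsub : A ⊆ B := hsub B hBd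
      have hBcard : B.card < C₀.card :=
        Finset.card_lt_card (Finset.ssubset_iff_subset_ne.mpr ⟨hBC₀, hBC₀ne⟩)
      have e1 : (C₀ \ B).card + B.card = C₀.card := Finset.card_sdiff_add_card_eq_card hBC₀
      have e2 : (C₀ \ A).card + A.card = C₀.card := Finset.card_sdiff_add_card_eq_card hAC₀
      have e3 : (B \ A).card + A.card = B.card := Finset.card_sdiff_add_card_eq_card hABsub
      have hBneA : B ≠ A := by
        intro h
        rw [h] at hcard1
        rw [hmdef] at hm2
        omega
      have hBD' : B ∈ D' := by
        rw [hD'def, Finset.mem_filter]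
        exact ⟨Finset.mem_univ B, hBd, hBneA⟩
      have := hC₀min B hBD'
      omega
    · -- improver adds an element outside C₀ : impossible
      have hBext : (B ∩ (C₀ᶜ : Finset I)).Nonempty := by
        rw [Finset.not_subset] at hBC₀
        obtain ⟨x, hxB, hxC₀⟩ := hBC₀
        exact ⟨x, Finset.mem_inter.mpr ⟨hxB, Finset.mem_compl.mpr hxC₀⟩⟩
      have hcard1 : (1 : ℝ) ≤ ((B ∩ (C₀ᶜ : Finset I)).card : ℝ) := by
        exact_mod_cast Finset.card_pos.mpr hBext
      have hδle : 0 ≤ δ * ((B ∩ (C₀ \ A)).card : ℝ) := by positivity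
      have hBq : util v q B ≤ maxv - M := by
        rw [hqsum]
        have h1 : util v p B ≤ v B := hutil_nn B
        have h2 : v B ≤ maxv := hmax B
        have h3 : M ≤ M * ((B ∩ (C₀ᶜ : Finset I)).card : ℝ) := by
          nlinarith
        linarith
      have h3 : maxv - M = -(δ * (m:ℝ)) - 1 := by rw [hMdef]; ring
      have h4 : 0 ≤ util v p C₀ := huC₀ ▸ huA0
      linarith
end

section
/- Let v₁,…,vₙ : 2^I → ℝ≥0 be gross substitutes valuations satisfying the local improvement property, and let p : I → ℝ≥0 be item prices such that for every agent i and every C ∈ local(B_i), u_i(p, B_i) > u_i(p, C), where B = (B₁,…,Bₙ) is an allocation. Then for every agent i, the demand set D_i(I, p) equals {B_i}. -/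
/-- suppose each valuation `vᵢ` satisfies the LI property, and (the gross
substitutes lemma) whenever a demanded set is not uniquely demanded, one of its local neighbors
is demanded.  If at nonnegative prices `p` each agent `i`'s bundle `Bᵢ` has strictly larger
utility than all its local neighbors, then `Dᵢ(I, p) = {Bᵢ}` for every agent `i`. -/
theorem stmt_11 {I : Type*} [Fintype I] [DecidableEq I] {n : ℕ}
    (v : Fin n → Finset I → ℝ) (hnn : ∀ i S, 0 ≤ v i S)
    (hLI : ∀ i, LocalImprovement (v i))
    (p : I → ℝ) (hp : ∀ j, 0 ≤ p j)
    (hlem : ∀ i, ∀ A ∈ demand (v i) p, (∃ C ∈ demand (v i) p, C ≠ A) →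
      ∃ B ∈ localSet A, B ∈ demand (v i) p)
    (B : Fin n → Finset I)
    (hstrict : ∀ i, ∀ C ∈ localSet (B i),
      v i C - ∑ j ∈ C, p j < v i (B i) - ∑ j ∈ B i, p j) :
    ∀ i, demand (v i) p = {B i} := by
  intro i
  have hBd : B i ∈ demand (v i) p := by
    by_contra h
    obtain ⟨C, hC, hlt⟩ := hLI i p hp (B i) h
    exact absurd hlt (not_lt.2 (le_of_lt (hstrict i C hC)))
  ext S
  constructor
  · intro hS
    by_contra hne
    have : ∃ C ∈ demand (v i) p, C ≠ B i := ⟨S, hS, hne⟩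
    obtain ⟨C, hCloc, hCd⟩ := hlem i (B i) hBd this
    exact absurd (hCd (B i)) (not_le.2 (hstrict i C hCloc))
  · intro hS
    rw [Set.mem_singleton_iff] at hS
    exact hS ▸ hBd
end

section
/- In the Price-k-Demand procedure's relation graph R_t, if agents have k-demand item-dependent valuations (v_i(b) ∈ {0, w(b)}), prices are p_t(B_i) = w(B_i) − ε^{r_i} with ε < min_{u∈I} w(u) and r_i the topological rank of B_i in the DAG obtained from R_t by removing all edges on directed cycles, then: whenever there is an edge ⟨s_i, s_j⟩ in the DAG (meaning v_i(B_j) = w(B_j)), agent i's utility for B_i strictly exceeds her utility for B_j. -/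
/-- In Price-k-Demand, with item weights `w > 0`, bundle weights
`Wt j = ∑_{b ∈ B j} w b`, agent `i` valuing her own bundle fully (`v i i = Wt i`),
`0 < ε < min_u w(u)` with `ε < 1`, topological ranks `r` and prices
`p j = Wt j − ε ^ (r j)`: for any DAG edge `⟨s_i, s_j⟩` (i.e. `v i j = Wt j` and
`r i < r j`), agent `i`'s utility for `B i` strictly exceeds her utility for `B j`. -/
theorem stmt_14 {I : Type*} [Fintype I] [DecidableEq I] (n : ℕ)
    (w : I → ℝ) (hw : ∀ u, 0 < w u)
    (B : Fin n → Finset I)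
    (v : Fin n → Fin n → ℝ)
    (Wt : Fin n → ℝ) (hWt : ∀ j, Wt j = ∑ b ∈ B j, w b)
    (hvii : ∀ i, v i i = Wt i)
    (ε : ℝ) (hε0 : 0 < ε) (hε1 : ε < 1) (hεw : ∀ u, ε < w u)
    (r : Fin n → ℕ)
    (p : Fin n → ℝ) (hp : ∀ j, p j = Wt j - ε ^ r j)
    (i j : Fin n) (hedge : v i j = Wt j) (hrank : r i < r j) :
    v i j - p j < v i i - p i := by
  rw [hedge, hvii, hp, hp]
  have := pow_lt_pow_right_of_lt_one₀ hε0 hε1 hrank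
  linarith
end

section
/- Let M be a maximum-weight matching of a complete bipartite graph between agents and items with nonnegative weights, let R be the associated relation graph on items (edge ⟨b,b'⟩ of weight v_a(b) − v_a(b') for (a,b) ∈ M, b' ≠ b), and let C be a directed cycle in R of total weight 0, say on items b₀, b₁, …, b_ℓ (indices mod ℓ+1) with b_j matched to agent a_j. Then the matching M' obtained from M by removing the pairs (a_j, b_j) and adding the pairs (a_j, b_{j+1 mod ℓ+1}) for all j is also a maximum-weight matching. -/
/-- Rotating a maximum-weight matching along a zero-weight directed cycle of its
relation graph yields another maximum-weight matching.  The matching of the complete bipartite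
graph (agents `N`, items `I`, nonnegative weights `v`, matching all items) is modelled as
`m : I ≃ N`; the relation-graph cycle on distinct items `c 0, …, c ℓ` has total weight
`∑ j (v (m (c j)) (c j) − v (m (c j)) (c (j+1))) = 0`, and the rotated matching `m'` assigns
to item `c (j+1)` the agent `m (c j)` (other items keep their agent). -/
theorem stmt_18 {N I : Type*} [Fintype N] [Fintype I] [DecidableEq I]
    (v : N → I → ℝ) (hv : ∀ a b, 0 ≤ v a b)
    (m : I ≃ N)
    (hmax : ∀ m'' : I ≃ N, ∑ b, v (m'' b) b ≤ ∑ b, v (m b) b)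
    (ℓ : ℕ) (c : Fin (ℓ + 1) → I) (hinj : Function.Injective c)
    (hzero : ∑ j : Fin (ℓ + 1), (v (m (c j)) (c j) - v (m (c j)) (c (j + 1))) = 0) :
    ∀ m' : I ≃ N, m' = ((List.ofFn c).formPerm).symm.trans m →
      (∑ b, v (m' b) b = ∑ b, v (m b) b) ∧
        ∀ m'' : I ≃ N, ∑ b, v (m'' b) b ≤ ∑ b, v (m' b) b := by
  classical
  intro m' hm'
  set σ : Equiv.Perm I := (List.ofFn c).formPerm with hσ
  have hnd : (List.ofFn c).Nodup := by
    rw [List.nodup_ofFn]; exact hinj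
  have hcyc : ∀ j : Fin (ℓ + 1), σ (c j) = c (j + 1) := by
    intro j
    have hlen : (j : ℕ) < (List.ofFn c).length := by simp [j.isLt]
    have := List.formPerm_apply_getElem (List.ofFn c) hnd j hlen
    simp only [List.getElem_ofFn] at this
    simp only [Fin.eta, List.length_ofFn] at this
    rw [hσ, this]
    apply congrArg
    ext
    simp [Fin.add_def]
  have hfix : ∀ b : I, b ∉ Set.range c → σ b = b := by
    intro b hb
    apply List.formPerm_apply_of_notMem
    simp only [List.mem_ofFn]
    exact hb
  have h0 : ∑ b, (v (m b) b - v (m b) (σ b)) = 0 := by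
    have hsub : ∑ b ∈ Finset.univ.image c, (v (m b) b - v (m b) (σ b))
        = ∑ b, (v (m b) b - v (m b) (σ b)) := by
      apply Finset.sum_subset (Finset.subset_univ _)
      intro b _ hb
      have : b ∉ Set.range c := by
        intro ⟨j, hj⟩
        exact hb (Finset.mem_image.2 ⟨j, Finset.mem_univ _, hj⟩)
      rw [hfix b this]; ring
    rw [← hsub, Finset.sum_image (fun x _ y _ h => hinj h)]
    rw [← hzero]
    apply Finset.sum_congr rfl
    intro j _
    rw [hcyc j]
  have key : ∑ b, v (m' b) b = ∑ b, v (m b) b := by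
    have h1 : ∑ b, v (m' b) b = ∑ b, v (m b) (σ b) := by
      rw [hm']
      exact (Equiv.sum_comp σ (fun b => v (m (σ.symm b)) b)).symm.trans
        (Finset.sum_congr rfl (fun b _ => by rw [Equiv.symm_apply_apply]))
    rw [h1]
    rw [Finset.sum_sub_distrib] at h0
    linarith
  exact ⟨key, fun m'' => key ▸ hmax m''⟩
end
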